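/- Let A be a commutative k-domain such that every k-algebra automorphism-free condition holds in the following sense: ML(A[t]) = A. Then A is cancellative: any k-algebra isomorphism A[t] ≅ B[t] implies A ≅ B. -/

import Mathlib

open Polynomial

universe u

/-- The Makar-Limanov invariant of a commutative `k`-algebra `R`, as a set:
the intersection of the kernels of all locally nilpotent derivations. -/
def MLSet (k R : Type u) [CommRing k] [CommRing R] [Algebra k R] : Set R :=
  {x : R | ∀ δ : Derivation k R R, (∀ a : R, ∃ n : ℕ, (⇑δ)^[n] a = 0) → δ x = 0}

/-- Conjugate a derivation by an algebra isomorphism. -/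
noncomputable def conjDer {k P Q : Type*} [CommRing k] [CommRing P] [CommRing Q] [Algebra k P] [Algebra k Q]
    (φ : P ≃ₐ[k] Q) (D : Derivation k Q Q) : Derivation k P P where
  toFun p := φ.symm (D (φ p))
  map_add' p q := by simp
  map_smul' c p := by simp
  map_one_eq_zero' := by simp
  leibniz' p q := by
    show φ.symm (D (φ (p * q))) = p • φ.symm (D (φ q)) + q • φ.symm (D (φ p))
    simp only [map_mul, Derivation.leibniz, smul_eq_mul, map_add, AlgEquiv.symm_apply_apply]

@[simp] lemma conjDer_apply {k P Q : Type*} [CommRing k] [CommRing P] [CommRing Q]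
    [Algebra k P] [Algebra k Q] (φ : P ≃ₐ[k] Q) (D : Derivation k Q Q) (p : P) :
    conjDer φ D p = φ.symm (D (φ p)) := rfl

/-- The polynomial derivative as a `k`-derivation. -/
noncomputable def derivDer (k B : Type*) [CommSemiring k] [CommSemiring B] [Algebra k B] :
    Derivation k (Polynomial B) (Polynomial B) where
  toFun := derivative
  map_add' _ _ := derivative_add
  map_smul' := derivative_smul
  map_one_eq_zero' := derivative_one
  leibniz' f g := by simp [mul_comm, add_comm, derivative_mul]

@[simp] lemma derivDer_apply (k B : Type*) [CommSemiring k] [CommSemiring B] [Algebra k B]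
    (p : Polynomial B) : derivDer k B p = derivative p := rfl

/-- Let `A` be an affine commutative `k`-domain (characteristic zero) with
`ML(A[t]) = A`.  Then `A` is cancellative: any `k`-algebra isomorphism
`A[t] ≅ B[t]` implies `A ≅ B`. -/
theorem cancellative_of_ML_poly_eq
    (k A : Type u) [Field k] [CharZero k] [CommRing A] [IsDomain A] [Algebra k A]
    (hfg : Algebra.FiniteType k A)
    (hML : MLSet k (Polynomial A) = Set.range (C : A → Polynomial A)) :
    ∀ (B : Type u) [Ring B] [Algebra k B],
      Nonempty (Polynomial A ≃ₐ[k] Polynomial B) → Nonempty (A ≃ₐ[k] B) := by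
  intro B _ _ ⟨φ⟩
  -- `B` embeds into the commutative domain `A[t]`.
  let j : B →+* Polynomial A := φ.symm.toRingHom.comp (C : B →+* Polynomial B)
  have hjinj : Function.Injective j := φ.symm.injective.comp C_injective
  letI : CommRing B := { ‹Ring B› with
    mul_comm := fun a b => hjinj (by simp only [j, map_mul]; rw [mul_comm]) }
  letI : IsDomain B := hjinj.isDomain j
  haveI : CharZero B := charZero_of_injective_algebraMap (algebraMap k B).injective
  -- every element of the form `φ (C a)` is a constant
  have hC : ∀ a : A, (C a) ∈ MLSet k (Polynomial A) := fun a => hML ▸ ⟨a, rfl⟩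
  have hiter : ∀ (n : ℕ) (p : Polynomial A),
      (⇑(conjDer φ (derivDer k B)))^[n] p = φ.symm (derivative^[n] (φ p)) := by
    intro n
    induction n with
    | zero => intro p; simp
    | succ n ih =>
        intro p
        rw [Function.iterate_succ_apply', ih, Function.iterate_succ_apply', conjDer_apply,
          AlgEquiv.apply_symm_apply, derivDer_apply]
  have hLND : ∀ p : Polynomial A, ∃ n : ℕ, (⇑(conjDer φ (derivDer k B)))^[n] p = 0 := by
    intro p
    exact ⟨(φ p).natDegree + 1, by
      rw [hiter, iterate_derivative_eq_zero (Nat.lt_succ_self _), map_zero]⟩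
  have hd : ∀ a : A, derivative (φ (C a)) = 0 := by
    intro a
    have h1 := hC a (conjDer φ (derivDer k B)) hLND
    rw [conjDer_apply, derivDer_apply] at h1
    exact φ.symm.injective (by rw [h1, map_zero])
  have hb : ∀ a : A, ∃ b : B, C b = φ (C a) := fun a =>
    natDegree_eq_zero.mp (natDegree_eq_zero_of_derivative_eq_zero (hd a))
  -- the induced map `A → B`
  let g : A → B := fun a => (hb a).choose
  have hg : ∀ a : A, C (g a) = φ (C a) := fun a => (hb a).choose_spec
  let ψ : A →ₐ[k] B :=
  { toFun := g
    map_one' := C_injective (show C (g 1) = C 1 by simp [hg])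
    map_mul' := fun x y => C_injective (show C (g (x * y)) = C (g x * g y) by
      rw [hg, map_mul, map_mul, map_mul, hg, hg])
    map_zero' := C_injective (show C (g 0) = C 0 by simp [hg])
    map_add' := fun x y => C_injective (show C (g (x + y)) = C (g x + g y) by
      rw [hg, map_add, map_add, map_add, hg, hg])
    commutes' := fun c => C_injective (show C (g (algebraMap k A c)) = C (algebraMap k B c) by
      rw [hg, ← Polynomial.algebraMap_apply, AlgEquiv.commutes, Polynomial.algebraMap_apply]) }
  have hψ : ∀ a : A, C (ψ a) = φ (C a) := hg
  have hψinj : Function.Injective ψ := by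
    intro x y hxy
    have : φ (C x) = φ (C y) := by rw [← hψ, ← hψ, hxy]
    exact C_injective (φ.injective this)
  -- `φ` is evaluation at `φ X` of the coefficientwise map `ψ`
  have key : ∀ p : Polynomial A, φ p = (p.map ψ.toRingHom).comp (φ X) := by
    intro p
    have h2 : (φ : Polynomial A →+* Polynomial B) =
        eval₂RingHom ((C : B →+* Polynomial B).comp ψ.toRingHom) (φ X) := by
      apply ringHom_ext
      · intro a
        simpa using (hψ a).symm
      · simp
    have h3 : (p.map ψ.toRingHom).comp (φ X) =
        eval₂ ((C : B →+* Polynomial B).comp ψ.toRingHom) (φ X) p := by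
      rw [comp, eval₂_map]
    rw [h3, ← coe_eval₂RingHom, ← h2]
    rfl
  have hφdeg : ∀ p : Polynomial A, (φ p).natDegree = p.natDegree * (φ X).natDegree := by
    intro p
    rw [key, natDegree_comp, natDegree_map_eq_of_injective hψinj]
  have hd1 : (φ X).natDegree ≠ 0 := by
    intro h0
    have h4 := hφdeg (φ.symm X)
    rw [AlgEquiv.apply_symm_apply, h0, mul_zero, natDegree_X] at h4
    exact one_ne_zero h4
  have hψsurj : Function.Surjective ψ := by
    intro b
    have h5 := hφdeg (φ.symm (C b))
    rw [AlgEquiv.apply_symm_apply, natDegree_C] at h5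
    have h6 : (φ.symm (C b)).natDegree = 0 :=
      (Nat.mul_eq_zero.mp h5.symm).resolve_right hd1
    obtain ⟨a, ha⟩ := natDegree_eq_zero.mp h6
    refine ⟨a, C_injective ?_⟩
    rw [hψ a, ha, AlgEquiv.apply_symm_apply]
  exact ⟨AlgEquiv.ofBijective ψ ⟨hψinj, hψsurj⟩⟩
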